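/- The distances from the vertices to the first Brocard point H+ satisfy (dist A H+)² = b⁴c²/(a²b² + b²c² + c²a²), (dist B H+)² = c⁴a²/(a²b² + b²c² + c²a²), and (dist C H+)² = a⁴b²/(a²b² + b²c² + c²a²). -/

import Mathlib

open EuclideanGeometry

private lemma sq_norm_combo (u v : EuclideanSpace ℝ (Fin 2)) (p q : ℝ) :
    ‖p • u + q • v‖^2 = p^2*‖u‖^2 + 2*p*q*(inner ℝ u v : ℝ) + q^2*‖v‖^2 := by
  rw [← real_inner_self_eq_norm_sq, ← real_inner_self_eq_norm_sq,
    ← real_inner_self_eq_norm_sq]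
  simp only [inner_add_left, inner_add_right, real_inner_smul_left, real_inner_smul_right,
    real_inner_comm u v]
  ring

theorem first_brocard_vertex_distances
    (A B C Hp : EuclideanSpace ℝ (Fin 2))
    (hABC : AffineIndependent ℝ ![A, B, C])
    (a b c : ℝ) (ha : a = dist B C) (hb : b = dist C A) (hc : c = dist A B)
    (hHp : Hp = (a^2*b^2 + b^2*c^2 + c^2*a^2)⁻¹ •
      ((a^2*c^2) • A + (a^2*b^2) • B + (b^2*c^2) • C)) :
    (dist A Hp)^2 = b^4 * c^2 / (a^2*b^2 + b^2*c^2 + c^2*a^2) ∧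
    (dist B Hp)^2 = c^4 * a^2 / (a^2*b^2 + b^2*c^2 + c^2*a^2) ∧
    (dist C Hp)^2 = a^4 * b^2 / (a^2*b^2 + b^2*c^2 + c^2*a^2) := by
  have hAB : A ≠ B := by
    have := hABC.injective.ne (show (0 : Fin 3) ≠ 1 by decide)
    simpa using this
  have hCA : C ≠ A := by
    have := hABC.injective.ne (show (2 : Fin 3) ≠ 0 by decide)
    simpa using this
  have hBC : B ≠ C := by
    have := hABC.injective.ne (show (1 : Fin 3) ≠ 2 by decide)
    simpa using this
  have hapos : 0 < a := ha ▸ dist_pos.2 hBC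
  have hbpos : 0 < b := hb ▸ dist_pos.2 hCA
  have hcpos : 0 < c := hc ▸ dist_pos.2 hAB
  set s : ℝ := a^2*b^2 + b^2*c^2 + c^2*a^2 with hs_def
  have hspos : 0 < s := by positivity
  have hs : s ≠ 0 := ne_of_gt hspos
  -- side lengths as norms
  have hna : ‖B - C‖ = a := by rw [ha, dist_eq_norm]
  have hnb : ‖C - A‖ = b := by rw [hb, dist_eq_norm]
  have hnc : ‖A - B‖ = c := by rw [hc, dist_eq_norm]
  -- inner products
  have hinner : ∀ (X Y Z : EuclideanSpace ℝ (Fin 2)) (x y z : ℝ),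
      ‖Y - Z‖ = x → ‖Z - X‖ = y → ‖X - Y‖ = z →
      (inner ℝ (Y - X) (Z - X) : ℝ) = (y^2 + z^2 - x^2)/2 := by
    intro X Y Z x y z hx hy hz
    have h : ‖(Y - X) - (Z - X)‖^2 = ‖Y - X‖^2 - 2*(inner ℝ (Y - X) (Z - X) : ℝ) + ‖Z - X‖^2 := by
      rw [← real_inner_self_eq_norm_sq, ← real_inner_self_eq_norm_sq,
        ← real_inner_self_eq_norm_sq]
      simp only [inner_sub_left, inner_sub_right, real_inner_comm]
      ring
    have e1 : (Y - X) - (Z - X) = Y - Z := by abel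
    rw [e1, hx] at h
    have e2 : ‖Y - X‖ = z := by rw [← hz, norm_sub_rev]
    have e3 : ‖Z - X‖ = y := by rw [← hy]
    rw [e2, e3] at h
    linarith
  have iA : (inner ℝ (B - A) (C - A) : ℝ) = (c^2 + b^2 - a^2)/2 := by
    have := hinner A B C a b c hna hnb hnc; linarith [this]
  have iB : (inner ℝ (A - B) (C - B) : ℝ) = (c^2 + a^2 - b^2)/2 := by
    have := hinner B A C b a c (by rwa [norm_sub_rev]) (by rwa [norm_sub_rev]) (by rwa [norm_sub_rev])
    linarith [this]
  have iC : (inner ℝ (A - C) (B - C) : ℝ) = (b^2 + a^2 - c^2)/2 := by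
    have := hinner C A B c a b hnc hna hnb
    linarith [this]
  have key : ∀ (X : EuclideanSpace ℝ (Fin 2)) (p q : ℝ) (U V : EuclideanSpace ℝ (Fin 2)),
      Hp - X = s⁻¹ • (p • U + q • V) →
      (dist X Hp)^2 = s⁻¹^2 * (p^2*‖U‖^2 + 2*p*q*(inner ℝ U V : ℝ) + q^2*‖V‖^2) := by
    intro X p q U V h
    rw [dist_comm, dist_eq_norm, h, norm_smul, mul_pow, sq_norm_combo]
    congr 1
    simp [abs_of_pos (inv_pos.2 hspos)]
  have hAeq : Hp - A = s⁻¹ • ((a^2*b^2) • (B - A) + (b^2*c^2) • (C - A)) := by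
    rw [hHp]
    have h1 : (a^2*c^2) + (a^2*b^2) + (b^2*c^2) = s := by rw [hs_def]; ring
    have : A = s⁻¹ • (s • A) := by rw [smul_smul, inv_mul_cancel₀ hs, one_smul]
    nth_rewrite 2 [this]
    rw [← smul_sub]
    congr 1
    rw [← h1]
    module
  have hBeq : Hp - B = s⁻¹ • ((a^2*c^2) • (A - B) + (b^2*c^2) • (C - B)) := by
    rw [hHp]
    have h1 : (a^2*c^2) + (a^2*b^2) + (b^2*c^2) = s := by rw [hs_def]; ring
    have : B = s⁻¹ • (s • B) := by rw [smul_smul, inv_mul_cancel₀ hs, one_smul]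
    nth_rewrite 2 [this]
    rw [← smul_sub]
    congr 1
    rw [← h1]
    module
  have hCeq : Hp - C = s⁻¹ • ((a^2*c^2) • (A - C) + (a^2*b^2) • (B - C)) := by
    rw [hHp]
    have h1 : (a^2*c^2) + (a^2*b^2) + (b^2*c^2) = s := by rw [hs_def]; ring
    have : C = s⁻¹ • (s • C) := by rw [smul_smul, inv_mul_cancel₀ hs, one_smul]
    nth_rewrite 2 [this]
    rw [← smul_sub]
    congr 1
    rw [← h1]
    module
  refine ⟨?_, ?_, ?_⟩
  · rw [key A _ _ _ _ hAeq, iA, show ‖B - A‖ = c by rw [norm_sub_rev, hnc], hnb]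
    field_simp
    ring
  · rw [key B _ _ _ _ hBeq, iB, show ‖A - B‖ = c from hnc,
      show ‖C - B‖ = a by rw [norm_sub_rev, hna]]
    field_simp
    ring
  · rw [key C _ _ _ _ hCeq, iC, show ‖A - C‖ = b by rw [norm_sub_rev, hnb],
      show ‖B - C‖ = a from hna]
    field_simp
    ring
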